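/- arXiv:2209.15473 — 4 statements merged into one kernel-verified Lean document; each statement's English description precedes it below -/
import Mathlib

section
/- Let g, h : ℝ^d → ℝ^t (with 1 ≤ t < d) be continuously differentiable functions having the same zero level set M := g⁻¹({0}) = h⁻¹({0}). Let θ₀ ∈ M, let G := Jg(θ₀) and H := Jh(θ₀) be the Jacobian matrices of g and h at θ₀, and suppose both have full row rank t (equivalently G·Gᵀ and H·Hᵀ are invertible). Then the Schay projection matrices coincide: I_d − Gᵀ(G·Gᵀ)⁻¹G = I_d − Hᵀ(H·Hᵀ)⁻¹H. (This is the paper's Lemma 1: the constrained generalized fiducial density is invariant to the form of the constraint function, since the two densities differ only through these projection matrices.) -/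
open Matrix

/-- The Jacobian matrix (in the standard bases) of a map `ℝ^d → ℝ^t` at a point. -/
noncomputable def jacobianMatrix {d t : ℕ} (g : (Fin d → ℝ) → (Fin t → ℝ))
    (θ : Fin d → ℝ) : Matrix (Fin t) (Fin d) ℝ :=
  fun i j => fderiv ℝ g θ (Pi.single j 1) i

/-- The Schay projection matrix `I − Aᵀ(AAᵀ)⁻¹A` associated to a full-row-rank matrix. -/
noncomputable def schayProjection {d t : ℕ} (A : Matrix (Fin t) (Fin d) ℝ) :
    Matrix (Fin d) (Fin d) ℝ :=
  1 - Aᵀ * (A * Aᵀ)⁻¹ * A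


lemma jac_mulVec {d t : ℕ} (g : (Fin d → ℝ) → (Fin t → ℝ)) (θ v : Fin d → ℝ) :
    jacobianMatrix g θ *ᵥ v = fderiv ℝ g θ v := by
  funext i
  have hv : v = ∑ j, v j • (Pi.single j (1:ℝ) : Fin d → ℝ) := by
    funext k
    simp [Pi.single_apply, Finset.sum_apply, eq_comm]
  conv_rhs => rw [hv]
  rw [map_sum]
  simp [mulVec, dotProduct, jacobianMatrix, Finset.sum_apply, mul_comm]

open LinearMap in
lemma ker_sub {d t : ℕ} (g h : (Fin d → ℝ) → (Fin t → ℝ))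
    (hg : ContDiff ℝ 1 g) (hh : ContDiff ℝ 1 h)
    (hlevel : g ⁻¹' {0} ⊆ h ⁻¹' {0})
    (θ₀ : Fin d → ℝ) (hθ₀ : g θ₀ = 0)
    (hsurj : (fderiv ℝ g θ₀).range = ⊤)
    (v : Fin d → ℝ) (hv : fderiv ℝ g θ₀ v = 0) : fderiv ℝ h θ₀ v = 0 := by
  set f' := fderiv ℝ g θ₀ with hf'
  have hf : HasStrictFDerivAt g f' θ₀ := hg.contDiffAt.hasStrictFDerivAt one_ne_zero
  set ψ : f'.ker → (Fin d → ℝ) := hf.implicitFunction g f' hsurj (g θ₀) with hψdef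
  have hψ : HasStrictFDerivAt ψ (f'.ker).subtypeL 0 := hf.to_implicitFunction hsurj
  have hψ0 : ψ 0 = θ₀ := hf.implicitFunction_apply_image hsurj
  have hev : ∀ᶠ z : f'.ker in nhds 0, g (ψ z) = g θ₀ := by
    have hmap := hf.map_implicitFunction_eq hsurj
    have hc : Filter.Tendsto (fun z : f'.ker => (g θ₀, z)) (nhds 0) (nhds (g θ₀, 0)) :=
      (continuous_const.prodMk continuous_id).tendsto' 0 _ rfl
    exact hc.eventually hmap
  have hev' : (h ∘ ψ) =ᶠ[nhds 0] fun _ => 0 := by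
    filter_upwards [hev] with z hz
    have : ψ z ∈ g ⁻¹' {0} := by simp [Set.mem_preimage, hz, hθ₀]
    simpa using hlevel this
  have hhd : HasFDerivAt h (fderiv ℝ h θ₀) (ψ 0) := by
    rw [hψ0]; exact ((hh.differentiable one_ne_zero) θ₀).hasFDerivAt
  have hcomp : HasFDerivAt (h ∘ ψ) ((fderiv ℝ h θ₀).comp (f'.ker).subtypeL) 0 :=
    hhd.comp 0 hψ.hasFDerivAt
  have hzero : HasFDerivAt (h ∘ ψ) (0 : (f'.ker) →L[ℝ] (Fin t → ℝ)) 0 :=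
    (hasFDerivAt_const (0 : Fin t → ℝ) 0).congr_of_eventuallyEq hev'
  have hD : (fderiv ℝ h θ₀).comp (f'.ker).subtypeL = 0 := hcomp.unique hzero
  have := congrArg (fun L => L ⟨v, hv⟩) hD
  simpa using this

lemma schay_eq_of_ker_eq {d t : ℕ} (G H : Matrix (Fin t) (Fin d) ℝ)
    (hG : IsUnit (G * Gᵀ)) (hH : IsUnit (H * Hᵀ))
    (hker : ∀ v, G *ᵥ v = 0 ↔ H *ᵥ v = 0) :
    (1 : Matrix (Fin d) (Fin d) ℝ) - Gᵀ * (G * Gᵀ)⁻¹ * G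
      = 1 - Hᵀ * (H * Hᵀ)⁻¹ * H := by
  have hGd : IsUnit (G * Gᵀ).det := (Matrix.isUnit_iff_isUnit_det _).1 hG
  have hHd : IsUnit (H * Hᵀ).det := (Matrix.isUnit_iff_isUnit_det _).1 hH
  have key : ∀ v : Fin d → ℝ,
      ((1 : Matrix (Fin d) (Fin d) ℝ) - Gᵀ * (G * Gᵀ)⁻¹ * G) *ᵥ v
        = ((1 : Matrix (Fin d) (Fin d) ℝ) - Hᵀ * (H * Hᵀ)⁻¹ * H) *ᵥ v := by
    intro v
    set pG := ((1 : Matrix (Fin d) (Fin d) ℝ) - Gᵀ * (G * Gᵀ)⁻¹ * G) *ᵥ v with hpG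
    set pH := ((1 : Matrix (Fin d) (Fin d) ℝ) - Hᵀ * (H * Hᵀ)⁻¹ * H) *ᵥ v with hpH
    have hGpG : G *ᵥ pG = 0 := by
      rw [hpG, Matrix.sub_mulVec, Matrix.one_mulVec, Matrix.mulVec_sub,
        Matrix.mulVec_mulVec]
      have : G * (Gᵀ * (G * Gᵀ)⁻¹ * G) = G := by
        rw [← Matrix.mul_assoc, ← Matrix.mul_assoc, Matrix.mul_nonsing_inv _ hGd, Matrix.one_mul]
      rw [this, sub_self]
    have hHpH : H *ᵥ pH = 0 := by
      rw [hpH, Matrix.sub_mulVec, Matrix.one_mulVec, Matrix.mulVec_sub,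
        Matrix.mulVec_mulVec]
      have : H * (Hᵀ * (H * Hᵀ)⁻¹ * H) = H := by
        rw [← Matrix.mul_assoc, ← Matrix.mul_assoc, Matrix.mul_nonsing_inv _ hHd, Matrix.one_mul]
      rw [this, sub_self]
    set u := pG - pH with hu
    have hGu : G *ᵥ u = 0 := by
      rw [hu, Matrix.mulVec_sub, hGpG, (hker pH).2 hHpH, sub_zero]
    have hHu : H *ᵥ u = 0 := (hker u).1 hGu
    have hdecomp : u = Hᵀ *ᵥ (((H * Hᵀ)⁻¹ * H) *ᵥ v) - Gᵀ *ᵥ (((G * Gᵀ)⁻¹ * G) *ᵥ v) := by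
      rw [hu, hpG, hpH, Matrix.sub_mulVec, Matrix.sub_mulVec, Matrix.mulVec_mulVec,
        Matrix.mulVec_mulVec, ← Matrix.mul_assoc, ← Matrix.mul_assoc]
      ring_nf
    have hdot : u ⬝ᵥ u = 0 := by
      have h1 : (Gᵀ *ᵥ (((G * Gᵀ)⁻¹ * G) *ᵥ v)) ⬝ᵥ u = 0 := by
        rw [Matrix.mulVec_transpose, ← Matrix.dotProduct_mulVec, hGu, dotProduct_zero]
      have h2 : (Hᵀ *ᵥ (((H * Hᵀ)⁻¹ * H) *ᵥ v)) ⬝ᵥ u = 0 := by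
        rw [Matrix.mulVec_transpose, ← Matrix.dotProduct_mulVec, hHu, dotProduct_zero]
      calc u ⬝ᵥ u = (Hᵀ *ᵥ (((H * Hᵀ)⁻¹ * H) *ᵥ v) - Gᵀ *ᵥ (((G * Gᵀ)⁻¹ * G) *ᵥ v)) ⬝ᵥ u := by
            rw [← hdecomp]
        _ = 0 := by rw [sub_dotProduct, h1, h2, sub_zero]
    have : u = 0 := dotProduct_self_eq_zero.mp hdot
    have := sub_eq_zero.mp (hu ▸ this)
    rw [hpG, hpH] at this
    exact this
  ext i j
  have := congrFun (key (Pi.single j 1)) i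
  simpa [Matrix.mulVec_single] using this

lemma range_top_of_unit {d t : ℕ} (g : (Fin d → ℝ) → (Fin t → ℝ)) (θ₀ : Fin d → ℝ)
    (hG : IsUnit (jacobianMatrix g θ₀ * (jacobianMatrix g θ₀)ᵀ)) :
    (fderiv ℝ g θ₀).range = ⊤ := by
  set G := jacobianMatrix g θ₀ with hGdef
  have hGd : IsUnit (G * Gᵀ).det := (Matrix.isUnit_iff_isUnit_det _).1 hG
  rw [LinearMap.range_eq_top]
  intro y
  refine ⟨Gᵀ *ᵥ ((G * Gᵀ)⁻¹ *ᵥ y), ?_⟩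
  rw [ContinuousLinearMap.coe_coe, ← jac_mulVec, ← hGdef, Matrix.mulVec_mulVec, Matrix.mulVec_mulVec,
    Matrix.mul_nonsing_inv _ hGd, Matrix.one_mulVec]


/-- paper's Lemma 1: if two C¹ constraint functions `g, h : ℝ^d → ℝ^t`
have the same zero level set and their Jacobians at `θ₀` have full row rank
(equivalently, `G·Gᵀ` and `H·Hᵀ` are invertible), then the Schay projection matrices
at `θ₀` coincide. -/
theorem schayProjection_independent_of_constraint
    {d t : ℕ} (ht : 1 ≤ t) (htd : t < d)
    (g h : (Fin d → ℝ) → (Fin t → ℝ))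
    (hg : ContDiff ℝ 1 g) (hh : ContDiff ℝ 1 h)
    (hlevel : g ⁻¹' {0} = h ⁻¹' {0})
    (θ₀ : Fin d → ℝ) (hθ₀ : θ₀ ∈ g ⁻¹' {0})
    (hG : IsUnit (jacobianMatrix g θ₀ * (jacobianMatrix g θ₀)ᵀ))
    (hH : IsUnit (jacobianMatrix h θ₀ * (jacobianMatrix h θ₀)ᵀ)) :
    schayProjection (jacobianMatrix g θ₀) = schayProjection (jacobianMatrix h θ₀) := by
  have hθg : g θ₀ = 0 := hθ₀
  have hθh : h θ₀ = 0 := by rw [hlevel] at hθ₀; exact hθ₀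
  have hker : ∀ v, jacobianMatrix g θ₀ *ᵥ v = 0 ↔ jacobianMatrix h θ₀ *ᵥ v = 0 := by
    intro v
    rw [jac_mulVec, jac_mulVec]
    constructor
    · exact ker_sub g h hg hh hlevel.subset θ₀ hθg (range_top_of_unit g θ₀ hG) v
    · exact ker_sub h g hh hg hlevel.symm.subset θ₀ hθh (range_top_of_unit h θ₀ hH) v
  exact schay_eq_of_ker_eq _ _ hG hH hker
end

section
/- Let J be a real n×d matrix, let N be a real d×k matrix whose columns are linearly independent, and let Q be a real d×k matrix with QᵀQ = I_k whose column space equals the column space of N. Then det(Nᵀ·Jᵀ·J·N) = det(Qᵀ·Jᵀ·J·Q) · det(NᵀN). -/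
open Matrix

/-- if `N` is a `d×k` matrix with linearly independent columns and `Q` is a
`d×k` matrix with orthonormal columns (`QᵀQ = I`) spanning the same column space as `N`,
then for any `n×d` matrix `J`,
`det(NᵀJᵀJN) = det(QᵀJᵀJQ) · det(NᵀN)`. -/
theorem det_gram_factorization
    {n d k : ℕ}
    (J : Matrix (Fin n) (Fin d) ℝ)
    (N : Matrix (Fin d) (Fin k) ℝ)
    (hN : LinearIndependent ℝ (fun j : Fin k => (fun i : Fin d => N i j)))
    (Q : Matrix (Fin d) (Fin k) ℝ)
    (hQ : Qᵀ * Q = 1)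
    (hspan : Submodule.span ℝ (Set.range (fun j : Fin k => (fun i : Fin d => Q i j)))
      = Submodule.span ℝ (Set.range (fun j : Fin k => (fun i : Fin d => N i j)))) :
    (Nᵀ * Jᵀ * J * N).det = (Qᵀ * Jᵀ * J * Q).det * (Nᵀ * N).det := by
  set C := Qᵀ * N with hC
  have hQN : Q * C = N := by
    ext i j
    -- column j of N lies in the span of the columns of Q
    have hmem : (fun i : Fin d => N i j) ∈
        Submodule.span ℝ (Set.range (fun j : Fin k => (fun i : Fin d => Q i j))) := by
      rw [hspan]; exact Submodule.subset_span ⟨j, rfl⟩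
    have hrange : ∃ c : Fin k → ℝ, Q.mulVec c = fun i : Fin d => N i j := by
      have h1 : (fun j : Fin k => (fun i : Fin d => Q i j)) = Q.col := rfl
      rw [h1, ← Matrix.range_mulVecLin] at hmem
      exact hmem
    obtain ⟨c, hc⟩ := hrange
    have h1 : Qᵀ.mulVec (fun i : Fin d => N i j) = c := by
      rw [← hc, Matrix.mulVec_mulVec, hQ, Matrix.one_mulVec]
    have h2 : Q.mulVec (Qᵀ.mulVec (fun i : Fin d => N i j)) = fun i : Fin d => N i j := by
      rw [h1, hc]
    have h3 := congrFun h2 i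
    simpa [hC, Matrix.mul_apply, Matrix.mulVec, dotProduct, Finset.mul_sum,
      Finset.sum_mul, mul_assoc, mul_comm, mul_left_comm] using h3
  have hNN : Nᵀ * N = Cᵀ * C := by
    rw [← hQN, Matrix.transpose_mul, Matrix.mul_assoc, ← Matrix.mul_assoc Qᵀ Q C, hQ,
      Matrix.one_mul]
  have hbig : Nᵀ * Jᵀ * J * N = Cᵀ * (Qᵀ * Jᵀ * J * Q) * C := by
    rw [← hQN, Matrix.transpose_mul]
    simp only [Matrix.mul_assoc]
  rw [hbig, hNN, Matrix.det_mul, Matrix.det_mul, Matrix.det_mul, Matrix.det_transpose]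
  ring
end

section
/- Let g : ℝ^{d−t} × ℝ^t → ℝ^t be continuously differentiable, let U ⊆ ℝ^{d−t} be open, let φ : U → ℝ^t be continuously differentiable with g(u, φ(u)) = 0 for all u ∈ U, and suppose the partial derivative ∂₂g is invertible at ι(u) := (u, φ(u)) for every u ∈ U. Let f : ℝ^d → [0,∞) be measurable, let J : ℝ^d → (real n×d matrices) be any function (the Jacobian of the data generating algorithm θ ↦ A(w,θ)), let N(u) denote the d×(d−t) Jacobian matrix of ι at u, and for each u ∈ U let Q(u) be a real d×(d−t) matrix with Q(u)ᵀQ(u) = I whose columns form a basis of the null space of the Jacobian matrix of g at ι(u). Then for every u ∈ U, f(ι(u)) · det(Q(u)ᵀ·J(ι(u))ᵀ·J(ι(u))·Q(u))^{1/2} · det(N(u)ᵀN(u))^{1/2} = f(ι(u)) · det((J(ι(u))·N(u))ᵀ·(J(ι(u))·N(u)))^{1/2}; consequently, for every measurable set M ⊆ U, the Lebesgue integrals over M of the two sides agree: ∫_M f(ι(u)) det(QᵀJᵀJQ)^{1/2} det(NᵀN)^{1/2} du = ∫_M f(ι(u)) det((J·N)ᵀ(J·N))^{1/2} du. -/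
open Matrix MeasureTheory

/-- A matrix of partial derivatives applied to a vector recovers the linear map. -/
lemma matrix_of_clm_mulVec {α β : Type*} [Fintype α] [DecidableEq α]
    (L : (α → ℝ) →L[ℝ] (β → ℝ)) (x : α → ℝ) (i : β) :
    Matrix.mulVec (Matrix.of fun i j => L (Pi.single j 1) i : Matrix β α ℝ) x i = L x i := by
  have h := LinearMap.pi_apply_eq_sum_univ (L : (α → ℝ) →ₗ[ℝ] (β → ℝ)) x
  have hs : ∀ j : α, (fun k => if j = k then (1:ℝ) else 0) = Pi.single j 1 := by
    intro j; ext k; simp [Pi.single_apply, eq_comm]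
  simp only [ContinuousLinearMap.coe_coe] at h
  rw [Matrix.mulVec, dotProduct]
  simp only [Matrix.of_apply]
  rw [h]
  simp only [Finset.sum_apply, Pi.smul_apply, smul_eq_mul]
  exact Finset.sum_congr rfl fun j _ => by rw [hs j, mul_comm]

/-- Orthonormal columns project vectors of their span to themselves. -/
lemma proj_span_eq {m k : Type*} [Fintype m] [Fintype k] [DecidableEq k]
    (Q : Matrix m k ℝ) (hQ : Qᵀ * Q = 1) (x : m → ℝ)
    (hx : x ∈ Submodule.span ℝ (Set.range fun j : k => (fun i => Q i j))) :
    Q.mulVec (Qᵀ.mulVec x) = x := by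
  obtain ⟨c, hc⟩ := (Submodule.mem_span_range_iff_exists_fun ℝ).1 hx
  have hxc : Q.mulVec c = x := by
    rw [← hc]; ext i
    simp [Matrix.mulVec, dotProduct, Finset.sum_apply, mul_comm]
  rw [← hxc, Matrix.mulVec_mulVec, Matrix.mulVec_mulVec, Matrix.mul_assoc, hQ, Matrix.mul_one]

/-- The Jacobian matrix (standard bases) of a map `ℝ^{(d−t)+t} → ℝ^t`, the ambient
coordinates being indexed by `Fin (d−t) ⊕ Fin t`. -/
noncomputable def constraintJacobian {d t : ℕ}
    (g : ((Fin (d - t) ⊕ Fin t) → ℝ) → (Fin t → ℝ))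
    (θ : (Fin (d - t) ⊕ Fin t) → ℝ) : Matrix (Fin t) (Fin (d - t) ⊕ Fin t) ℝ :=
  fun i j => fderiv ℝ g θ (Pi.single j 1) i

/-- The graph map `ι(u) = (u, φ(u))` of an implicit function, written in the ambient
coordinates `Fin (d−t) ⊕ Fin t`. -/
def graphMap {d t : ℕ} (φ : (Fin (d - t) → ℝ) → (Fin t → ℝ))
    (u : Fin (d - t) → ℝ) : (Fin (d - t) ⊕ Fin t) → ℝ :=
  Sum.elim u (φ u)

/-- The `d×(d−t)` Jacobian matrix of the graph map `ι` at `u`. -/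
noncomputable def graphJacobian {d t : ℕ} (φ : (Fin (d - t) → ℝ) → (Fin t → ℝ))
    (u : Fin (d - t) → ℝ) : Matrix (Fin (d - t) ⊕ Fin t) (Fin (d - t)) ℝ :=
  fun i j => fderiv ℝ (graphMap φ) u (Pi.single j 1) i

/-- paper's Theorem 2, in local coordinates: on the chart given by the
implicit-function graph parameterization of the manifold `g⁻¹({0})`, the unnormalized
constrained-GFD kernel `f(ι(u))·det(QᵀJᵀJQ)^{1/2}` integrated against the Riemannian
volume element `det(NᵀN)^{1/2} du` coincides, pointwise and hence in integral over any
measurable `M ⊆ U`, with the reparameterized GFD kernel `f(ι(u))·det((JN)ᵀ(JN))^{1/2}`. -/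
theorem constrained_gfd_eq_reparameterized_gfd
    {d t n : ℕ} (ht : t ≤ d)
    (g : ((Fin (d - t) ⊕ Fin t) → ℝ) → (Fin t → ℝ)) (hg : ContDiff ℝ 1 g)
    (U : Set (Fin (d - t) → ℝ)) (hU : IsOpen U)
    (φ : (Fin (d - t) → ℝ) → (Fin t → ℝ)) (hφ : ContDiffOn ℝ 1 φ U)
    (hgφ : ∀ u ∈ U, g (graphMap φ u) = 0)
    (hinv : ∀ u ∈ U,
      IsUnit ((constraintJacobian g (graphMap φ u)).submatrix id Sum.inr))
    (f : ((Fin (d - t) ⊕ Fin t) → ℝ) → ℝ)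
    (hfmeas : Measurable f) (hf0 : ∀ θ, 0 ≤ f θ)
    (J : ((Fin (d - t) ⊕ Fin t) → ℝ) → Matrix (Fin n) (Fin (d - t) ⊕ Fin t) ℝ)
    (Q : (Fin (d - t) → ℝ) → Matrix (Fin (d - t) ⊕ Fin t) (Fin (d - t)) ℝ)
    (hQorth : ∀ u ∈ U, (Q u)ᵀ * Q u = 1)
    (hQspan : ∀ u ∈ U,
      Submodule.span ℝ (Set.range (fun j : Fin (d - t) => (fun i => Q u i j)))
        = LinearMap.ker (constraintJacobian g (graphMap φ u)).mulVecLin) :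
    (∀ u ∈ U,
      f (graphMap φ u)
          * Real.sqrt (((Q u)ᵀ * (J (graphMap φ u))ᵀ * J (graphMap φ u) * Q u).det)
          * Real.sqrt (((graphJacobian φ u)ᵀ * graphJacobian φ u).det)
        = f (graphMap φ u)
          * Real.sqrt (((J (graphMap φ u) * graphJacobian φ u)ᵀ
              * (J (graphMap φ u) * graphJacobian φ u)).det)) ∧
    (∀ M : Set (Fin (d - t) → ℝ), M ⊆ U → MeasurableSet M →
      ∫ u in M,
          f (graphMap φ u)
            * Real.sqrt (((Q u)ᵀ * (J (graphMap φ u))ᵀ * J (graphMap φ u) * Q u).det)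
            * Real.sqrt (((graphJacobian φ u)ᵀ * graphJacobian φ u).det)
        = ∫ u in M,
            f (graphMap φ u)
              * Real.sqrt (((J (graphMap φ u) * graphJacobian φ u)ᵀ
                  * (J (graphMap φ u) * graphJacobian φ u)).det)) := by
  have key : ∀ u ∈ U,
      f (graphMap φ u)
          * Real.sqrt (((Q u)ᵀ * (J (graphMap φ u))ᵀ * J (graphMap φ u) * Q u).det)
          * Real.sqrt (((graphJacobian φ u)ᵀ * graphJacobian φ u).det)
        = f (graphMap φ u)
          * Real.sqrt (((J (graphMap φ u) * graphJacobian φ u)ᵀ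
              * (J (graphMap φ u) * graphJacobian φ u)).det) := by
    intro u hu
    have hφd : DifferentiableAt ℝ φ u :=
      (hφ.differentiableOn one_ne_zero).differentiableAt (hU.mem_nhds hu)
    have hιd : DifferentiableAt ℝ (graphMap φ) u := by
      rw [differentiableAt_pi]
      intro i
      cases i with
      | inl i =>
        exact (show DifferentiableAt ℝ (fun x : (Fin (d - t) → ℝ) => x i) u from
          differentiableAt_pi.1 differentiableAt_fun_id i)
      | inr i => exact differentiableAt_pi.1 hφd i
    have hgd : DifferentiableAt ℝ g (graphMap φ u) := (hg.differentiable one_ne_zero) _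
    have hloc : (g ∘ graphMap φ) =ᶠ[nhds u] fun _ => (0 : Fin t → ℝ) := by
      filter_upwards [hU.mem_nhds hu] with v hv using hgφ v hv
    have hfz : fderiv ℝ (g ∘ graphMap φ) u = 0 := by
      rw [hloc.fderiv_eq]; exact fderiv_const_apply 0
    have hchain : fderiv ℝ (g ∘ graphMap φ) u
        = (fderiv ℝ g (graphMap φ u)).comp (fderiv ℝ (graphMap φ) u) :=
      fderiv_comp u hgd hιd
    set θ := graphMap φ u with hθ
    set N := graphJacobian φ u with hNdef
    set G := constraintJacobian g θ with hGdef
    have hNvec : ∀ x, N.mulVec x = fderiv ℝ (graphMap φ) u x := by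
      intro x; ext i; exact matrix_of_clm_mulVec (fderiv ℝ (graphMap φ) u) x i
    have hGvec : ∀ y, G.mulVec y = fderiv ℝ g θ y := by
      intro y; ext i; exact matrix_of_clm_mulVec (fderiv ℝ g θ) y i
    have hker : ∀ j : Fin (d - t), (fun i => N i j) ∈ LinearMap.ker G.mulVecLin := by
      intro j
      rw [LinearMap.mem_ker]
      have h1 : (fun i => N i j) = N.mulVec (Pi.single j 1) := by
        ext i; simp
      rw [Matrix.mulVecLin_apply, h1, hNvec, hGvec]
      calc fderiv ℝ g θ (fderiv ℝ (graphMap φ) u (Pi.single j 1))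
          = ((fderiv ℝ g θ).comp (fderiv ℝ (graphMap φ) u)) (Pi.single j 1) := rfl
        _ = fderiv ℝ (g ∘ graphMap φ) u (Pi.single j 1) := by rw [hchain]
        _ = 0 := by rw [hfz]; rfl
    have hQN : Q u * ((Q u)ᵀ * N) = N := by
      ext i j
      have hcol : Q u *ᵥ ((Q u)ᵀ *ᵥ fun i => N i j) = fun i => N i j :=
        proj_span_eq (Q u) (hQorth u hu) _ (by rw [hQspan u hu]; exact hker j)
      have h2 := congrFun hcol i
      simp only [Matrix.mul_apply, Matrix.mulVec, dotProduct,
        Matrix.transpose_apply] at h2 ⊢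
      exact h2
    set C := (Q u)ᵀ * N with hC
    have hNtN : Nᵀ * N = Cᵀ * C := by
      conv_lhs => rw [← hQN]
      rw [Matrix.transpose_mul, Matrix.mul_assoc, ← Matrix.mul_assoc ((Q u)ᵀ),
        hQorth u hu, Matrix.one_mul]
    have hJNt : (J θ * N)ᵀ * (J θ * N)
        = Cᵀ * ((Q u)ᵀ * (J θ)ᵀ * J θ * Q u) * C := by
      conv_lhs => rw [← hQN]
      simp only [Matrix.transpose_mul, Matrix.mul_assoc]
    have hdetN : (Nᵀ * N).det = C.det ^ 2 := by
      rw [hNtN, Matrix.det_mul, Matrix.det_transpose, sq]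
    have hdetJN : ((J θ * N)ᵀ * (J θ * N)).det
        = C.det ^ 2 * ((Q u)ᵀ * (J θ)ᵀ * J θ * Q u).det := by
      rw [hJNt, Matrix.det_mul, Matrix.det_mul, Matrix.det_transpose]; ring
    rw [hdetN, hdetJN, Real.sqrt_mul (sq_nonneg _)]
    ring
  exact ⟨key, fun M hMU hM => setIntegral_congr_fun hM fun u hu => key u (hMU hu)⟩
end

section
/- Let A be a real skew-symmetric n×n matrix (so that I + A and I − A are invertible), let Λ be a real diagonal n×n matrix, fix indices q ≠ r, and set E := E^{q,r} − E^{r,q}, where E^{i,j} is the matrix with a one in entry (i,j) and zeros elsewhere. Define Σ(X) := (I − X)·(I + X)⁻¹·Λ²·(I − X)⁻¹·(I + X) for X in a neighborhood of A on which I ± X are invertible. Then the map s ↦ Σ(A + s·E) is differentiable at s = 0 with derivative 2·(B + Bᵀ), where B := (I + A)⁻¹·(E^{r,q} − E^{q,r})·(I + A)⁻¹·Λ²·(I − A)⁻¹·(I + A). -/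
open Matrix

attribute [local instance] Matrix.frobeniusNormedRing Matrix.frobeniusNormedAlgebra

attribute [local instance] Matrix.frobeniusNormedAddCommGroup Matrix.frobeniusNormedSpace

section aux

lemma isUnit_one_add_skew {n : ℕ} (A : Matrix (Fin n) (Fin n) ℝ) (hA : Aᵀ = -A) :
    IsUnit (1 + A) := by
  rw [Matrix.isUnit_iff_isUnit_det, isUnit_iff_ne_zero]
  intro hdet
  obtain ⟨v, hv, hmv⟩ := (Matrix.exists_mulVec_eq_zero_iff).2 hdet
  have hAv : v ⬝ᵥ (A *ᵥ v) = 0 := by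
    have h1 : v ⬝ᵥ (A *ᵥ v) = (Aᵀ *ᵥ v) ⬝ᵥ v := by
      rw [Matrix.dotProduct_mulVec, ← Matrix.vecMul_transpose, Matrix.transpose_transpose]
    rw [hA] at h1
    have h2 : ((-A) *ᵥ v) ⬝ᵥ v = -(v ⬝ᵥ (A *ᵥ v)) := by
      rw [Matrix.neg_mulVec, neg_dotProduct, dotProduct_comm]
    have := h1.trans h2
    linarith
  have : v ⬝ᵥ ((1 + A) *ᵥ v) = v ⬝ᵥ v + v ⬝ᵥ (A *ᵥ v) := by
    rw [Matrix.add_mulVec, Matrix.one_mulVec, dotProduct_add]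
  rw [hmv, dotProduct_zero, hAv, add_zero] at this
  exact hv (dotProduct_self_eq_zero.1 this.symm)

lemma hasDerivAt_aff {n : ℕ} (M E : Matrix (Fin n) (Fin n) ℝ) :
    HasDerivAt (fun s : ℝ => M + s • E) E 0 := by
  have := ((hasDerivAt_id (0:ℝ)).smul_const E).const_add M
  rwa [one_smul] at this

lemma hasDerivAt_inv_aff {n : ℕ} (M E : Matrix (Fin n) (Fin n) ℝ) (h : IsUnit M) :
    HasDerivAt (fun s : ℝ => (M + s • E)⁻¹) (-(M⁻¹ * E * M⁻¹)) 0 := by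
  have hg := hasDerivAt_aff M E
  have hf : HasFDerivAt Ring.inverse
      (-ContinuousLinearMap.mulLeftRight ℝ _ (↑h.unit⁻¹) (↑h.unit⁻¹))
      ((fun s : ℝ => M + s • E) 0) := by
    have hpt : ((fun s : ℝ => M + s • E) 0) = (h.unit : Matrix (Fin n) (Fin n) ℝ) := by
      simp [h.unit_spec]
    rw [hpt]
    exact hasFDerivAt_ringInverse h.unit
  have hcomp := hf.comp_hasDerivAt 0 hg
  have hfun : (fun s : ℝ => (M + s • E)⁻¹) = Ring.inverse ∘ (fun s : ℝ => M + s • E) := by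
    funext s; simp [Function.comp, Matrix.nonsing_inv_eq_ringInverse]
  rw [hfun]
  refine hcomp.congr_deriv ?_
  have hu : (↑h.unit⁻¹ : Matrix (Fin n) (Fin n) ℝ) = Ring.inverse M := by
    rw [← Ring.inverse_unit, h.unit_spec]
  simp [Matrix.nonsing_inv_eq_ringInverse, hu, ContinuousLinearMap.mulLeftRight_apply]

lemma helper_alg {n : ℕ} (U V X Y L E : Matrix (Fin n) (Fin n) ℝ)
    (hUX : U * X = 1) (hYV : Y * V = 1) (h2 : U + V = 2) :
    ((-E * X + V * -(X * E * X)) * L * Y + V * X * L * (Y * E * Y)) * U + V * X * L * Y * E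
      = (2 : ℝ) • (X * -E * X * L * Y * U + V * X * L * Y * E * Y) := by
  have hEX : -E * X = -(U * (X * E * X)) := by
    rw [show X * E * X = X * (E * X) from by rw [mul_assoc], ← mul_assoc, hUX, one_mul, neg_mul]
  have hpair1 : -E * X + V * -(X * E * X) = -((2:ℝ) • (X * E * X)) := by
    rw [hEX, mul_neg, ← neg_add, ← add_mul, h2]
    congr 1
    rw [two_smul ℝ, two_mul]
  have hYE : V * X * L * Y * E = V * X * L * (Y * E * Y) * V := by
    rw [mul_assoc (V*X*L) (Y*E*Y) V, mul_assoc (Y*E) Y V, hYV, mul_one,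
      ← mul_assoc (V*X*L) Y E]
  have hpair2 : V * X * L * (Y * E * Y) * U + V * X * L * Y * E
      = (2:ℝ) • (V * X * L * Y * E * Y) := by
    conv_lhs => rw [hYE]
    rw [← mul_add, h2, mul_two, two_smul ℝ]
    simp [mul_assoc]
  rw [hpair1, add_mul, add_assoc, hpair2, smul_add]
  congr 1
  simp [smul_mul_assoc, mul_neg, neg_mul]

end aux


/-- paper's AR(1) example, `∂Σ/∂A_{q,r}`: with `A` skew-symmetric,
`Λ = diagonal l`, `q ≠ r`, `E = E^{q,r} − E^{r,q}`, and
`Σ(X) = (I−X)(I+X)⁻¹ Λ² (I−X)⁻¹(I+X)`, the map `s ↦ Σ(A + s·E)` is differentiable at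
`s = 0` with derivative `2(B + Bᵀ)`, where
`B = (I+A)⁻¹ (E^{r,q} − E^{q,r}) (I+A)⁻¹ Λ² (I−A)⁻¹ (I+A)`. -/
theorem ar1_sigma_deriv_skew
    {n : ℕ} (A : Matrix (Fin n) (Fin n) ℝ) (hA : Aᵀ = -A)
    (l : Fin n → ℝ) (q r : Fin n) (hqr : q ≠ r)
    (E : Matrix (Fin n) (Fin n) ℝ)
    (hE : E = Matrix.single q r 1 - Matrix.single r q 1)
    (B : Matrix (Fin n) (Fin n) ℝ)
    (hB : B = (1 + A)⁻¹ * (Matrix.single r q 1 - Matrix.single q r 1)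
      * (1 + A)⁻¹ * (Matrix.diagonal l) ^ 2 * (1 - A)⁻¹ * (1 + A)) :
    HasDerivAt
      (fun s : ℝ =>
        (1 - (A + s • E)) * (1 + (A + s • E))⁻¹ * (Matrix.diagonal l) ^ 2
          * (1 - (A + s • E))⁻¹ * (1 + (A + s • E)))
      ((2 : ℝ) • (B + Bᵀ))
      0 := by
  have hU : IsUnit (1 + A) := isUnit_one_add_skew A hA
  have hV : IsUnit (1 - A) := by
    have := isUnit_one_add_skew (-A) (by rw [Matrix.transpose_neg, hA, neg_neg])
    simpa [sub_eq_add_neg] using this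
  set L : Matrix (Fin n) (Fin n) ℝ := (Matrix.diagonal l) ^ 2 with hL
  -- derivative pieces
  have h1 : HasDerivAt (fun s : ℝ => 1 - (A + s • E)) (-E) 0 := by
    have e : (fun s : ℝ => 1 - (A + s • E)) = fun s : ℝ => (1 - A) + s • (-E) := by
      funext s; rw [smul_neg]; abel
    rw [e]; exact hasDerivAt_aff (1 - A) (-E)
  have h2 : HasDerivAt (fun s : ℝ => (1 + (A + s • E))⁻¹)
      (-((1 + A)⁻¹ * E * (1 + A)⁻¹)) 0 := by
    have e : (fun s : ℝ => (1 + (A + s • E))⁻¹) = fun s : ℝ => ((1 + A) + s • E)⁻¹ := by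
      funext s; rw [add_assoc]
    rw [e]; exact hasDerivAt_inv_aff (1 + A) E hU
  have h4 : HasDerivAt (fun s : ℝ => (1 - (A + s • E))⁻¹)
      ((1 - A)⁻¹ * E * (1 - A)⁻¹) 0 := by
    have e : (fun s : ℝ => (1 - (A + s • E))⁻¹) = fun s : ℝ => ((1 - A) + s • (-E))⁻¹ := by
      funext s; congr 1; rw [smul_neg]; abel
    rw [e]
    simpa [mul_neg, neg_mul] using hasDerivAt_inv_aff (1 - A) (-E) hV
  have h5 : HasDerivAt (fun s : ℝ => 1 + (A + s • E)) E 0 := by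
    have e : (fun s : ℝ => 1 + (A + s • E)) = fun s : ℝ => (1 + A) + s • E := by
      funext s; rw [add_assoc]
    rw [e]; exact hasDerivAt_aff (1 + A) E
  have hprod := (((h1.mul h2).mul_const L).mul h4).mul h5
  refine hprod.congr_deriv (Eq.symm ?_)
  simp only [zero_smul, add_zero]
  simp only [Pi.mul_apply, zero_smul, add_zero]
  -- now pure algebra
  have hUdet : IsUnit (1 + A).det := (Matrix.isUnit_iff_isUnit_det _).1 hU
  have hVdet : IsUnit (1 - A).det := (Matrix.isUnit_iff_isUnit_det _).1 hV
  have hUX : (1 + A) * (1 + A)⁻¹ = 1 := Matrix.mul_nonsing_inv _ hUdet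
  have hYV : (1 - A)⁻¹ * (1 - A) = 1 := Matrix.nonsing_inv_mul _ hVdet
  have hsum : (1 + A) + (1 - A) = (2 : Matrix (Fin n) (Fin n) ℝ) := by
    noncomm_ring; rw [two_smul]; exact one_add_one_eq_two
  have hBfull : B = (1 + A)⁻¹ * -E * (1 + A)⁻¹ * L * (1 - A)⁻¹ * (1 + A) := by
    rw [hB, show Matrix.single r q 1 - Matrix.single q r 1 = -E from by
      rw [hE, neg_sub]]
  have hEt : Eᵀ = -E := by
    rw [hE]; ext i j
    simp [Matrix.single, and_comm]
  have hUt : (1 + A)ᵀ = 1 - A := by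
    rw [Matrix.transpose_add, Matrix.transpose_one, hA, ← sub_eq_add_neg]
  have hVt : (1 - A)ᵀ = 1 + A := by
    rw [Matrix.transpose_sub, Matrix.transpose_one, hA, sub_neg_eq_add]
  have hLt : Lᵀ = L := by rw [hL, Matrix.transpose_pow, Matrix.diagonal_transpose]
  have hBT : Bᵀ = (1 - A) * (1 + A)⁻¹ * L * (1 - A)⁻¹ * E * (1 - A)⁻¹ := by
    rw [hBfull]
    simp only [Matrix.transpose_mul, Matrix.transpose_nonsing_inv, Matrix.transpose_neg,
      hEt, hUt, hVt, hLt, neg_neg]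
    noncomm_ring
  rw [hBT, hBfull]
  exact (helper_alg (1 + A) (1 - A) (1 + A)⁻¹ (1 - A)⁻¹ L E hUX hYV hsum).symm
end
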